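/- For b a prime power, there is a subgroup G ≤ Aut(K_b □ K_b), transitive on vertices and edges, with a nontrivial normal subgroup N whose quotient graph (K_b □ K_b)_N is isomorphic to K_b. Explicitly, with vertices labelled by GF(b)², N = {(i,j) ↦ (i+x, j+x) : x ∈ GF(b)} is normal in G = ⟨(i,j) ↦ (ri+s, rj+s'), (i,j) ↦ (j,i) : r ∈ GF(b)*, s,s' ∈ GF(b)⟩, and G is vertex- and edge-transitive on K_b □ K_b. -/

import Mathlib

/-- The Cartesian product `K_b □ K_b` (rook's graph): vertices are pairs, adjacent iff
they agree in exactly one coordinate. -/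
def rookGraph (α : Type*) : SimpleGraph (α × α) where
  Adj p q := (p.1 = q.1 ∧ p.2 ≠ q.2) ∨ (p.2 = q.2 ∧ p.1 ≠ q.1)
  symm := by
    constructor
    rintro p q (⟨h1, h2⟩ | ⟨h1, h2⟩)
    exacts [Or.inl ⟨h1.symm, h2.symm⟩, Or.inr ⟨h1.symm, h2.symm⟩]
  loopless := by constructor; rintro p (⟨-, h⟩ | ⟨-, h⟩) <;> exact h rfl

instance rookGraph.adjDecidable (α : Type*) [DecidableEq α] :
    DecidableRel (rookGraph α).Adj := fun _ _ => by
  unfold rookGraph; infer_instance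

open MulAction

/-- The normal quotient graph on the `N`-orbits. -/
def quotientGraph {V G : Type*} (Γ : SimpleGraph V) [Group G] [MulAction G V]
    (N : Subgroup G) : SimpleGraph (Quotient (orbitRel N V)) where
  Adj X Y := X ≠ Y ∧ ∃ x y : V, Quotient.mk (orbitRel N V) x = X ∧
    Quotient.mk (orbitRel N V) y = Y ∧ Γ.Adj x y
  symm := by
    constructor
    rintro X Y ⟨hne, x, y, hx, hy, hxy⟩
    exact ⟨hne.symm, y, x, hy, hx, hxy.symm⟩
  loopless := by constructor; rintro X ⟨h, -⟩; exact h rfl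

/-- The permutation `(i,j) ↦ (i+x, j+x)` of `F × F`. -/
def diagShift {F : Type*} [Field F] (x : F) : Equiv.Perm (F × F) :=
  Equiv.prodCongr (Equiv.addRight x) (Equiv.addRight x)

/-- The permutation `(i,j) ↦ (ri+s, rj+s')` of `F × F`, for `r ≠ 0`. -/
def affMap {F : Type*} [Field F] (r : Fˣ) (s s' : F) : Equiv.Perm (F × F) :=
  Equiv.prodCongr ((Equiv.mulLeft₀ (r : F) r.ne_zero).trans (Equiv.addRight s))
    ((Equiv.mulLeft₀ (r : F) r.ne_zero).trans (Equiv.addRight s'))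

section Aux

variable {F : Type*} [Field F]

lemma diagShift_apply (x : F) (p : F × F) : diagShift x p = (p.1 + x, p.2 + x) := rfl

lemma affMap_apply (r : Fˣ) (s s' : F) (p : F × F) :
    affMap r s s' p = (r * p.1 + s, r * p.2 + s') := rfl

lemma diagShift_eq_affMap (x : F) : diagShift x = affMap 1 x x := by
  ext p <;> simp [diagShift_apply, affMap_apply]

lemma affMap_mul_diagShift (r : Fˣ) (s s' x : F) :
    affMap r s s' * diagShift x = diagShift (r * x) * affMap r s s' := by
  ext p <;> simp [Equiv.Perm.mul_apply, diagShift_apply, affMap_apply] <;> ring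

lemma prodComm_mul_diagShift (x : F) :
    (Equiv.prodComm F F) * diagShift x = diagShift x * (Equiv.prodComm F F) := by
  ext p <;> simp [Equiv.Perm.mul_apply, diagShift_apply]

lemma diagShift_mul (x y : F) : diagShift x * diagShift y = diagShift (y + x) := by
  ext p <;> simp [Equiv.Perm.mul_apply, diagShift_apply] <;> ring

lemma diagShift_zero : (diagShift (0:F)) = 1 := by
  ext p <;> simp [diagShift_apply]

lemma diagShift_inv (x : F) : (diagShift x)⁻¹ = diagShift (-x) := by
  rw [eq_comm, eq_inv_iff_mul_eq_one, diagShift_mul, add_neg_cancel, diagShift_zero]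

lemma mem_N_iff {n : Equiv.Perm (F × F)} :
    n ∈ Subgroup.closure (Set.range (diagShift (F := F))) ↔ ∃ x, diagShift x = n := by
  constructor
  · intro hn
    induction hn using Subgroup.closure_induction with
    | mem g hg => exact hg
    | one => exact ⟨0, diagShift_zero⟩
    | mul a b _ _ ha hb =>
      obtain ⟨x, rfl⟩ := ha; obtain ⟨y, rfl⟩ := hb
      exact ⟨y + x, (diagShift_mul x y).symm⟩
    | inv a _ ha => obtain ⟨x, rfl⟩ := ha; exact ⟨-x, (diagShift_inv x).symm⟩
  · rintro ⟨x, rfl⟩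
    exact Subgroup.subset_closure ⟨x, rfl⟩

lemma conj_mem_N {g : Equiv.Perm (F × F)} (h : ∀ x : F, ∃ y, g * diagShift x = diagShift y * g) :
    ∀ n ∈ Subgroup.closure (Set.range (diagShift (F := F))), g * n * g⁻¹ ∈
      Subgroup.closure (Set.range (diagShift (F := F))) := by
  intro n hn
  obtain ⟨x, rfl⟩ := mem_N_iff.1 hn
  obtain ⟨y, hy⟩ := h x
  rw [hy, mul_inv_cancel_right]
  exact mem_N_iff.2 ⟨y, rfl⟩

lemma mem_normalizer_N {g : Equiv.Perm (F × F)}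
    (h : ∀ x : F, ∃ y, g * diagShift x = diagShift y * g)
    (h' : ∀ x : F, ∃ y, g⁻¹ * diagShift x = diagShift y * g⁻¹) :
    g ∈ Subgroup.normalizer ((Subgroup.closure (Set.range (diagShift (F := F)))) : Set _) := by
  rw [Subgroup.mem_normalizer_iff]
  intro n
  constructor
  · intro hn; exact conj_mem_N h n hn
  · intro hn
    have := conj_mem_N h' _ hn
    simpa [mul_assoc] using this

lemma rook_adj_iff (p q : F × F) : (rookGraph F).Adj p q ↔
    (p.1 = q.1 ∧ p.2 ≠ q.2) ∨ (p.2 = q.2 ∧ p.1 ≠ q.1) := Iff.rfl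

/-- The subgroup of permutations preserving the rook graph. -/
def autSub (α : Type*) : Subgroup (Equiv.Perm (α × α)) where
  carrier := {g | ∀ u v, (rookGraph α).Adj (g u) (g v) ↔ (rookGraph α).Adj u v}
  one_mem' := by intro u v; rfl
  mul_mem' := by
    intro a b ha hb u v
    simp only [Equiv.Perm.mul_apply]
    rw [ha, hb]
  inv_mem' := by
    intro a ha u v
    rw [← ha (a⁻¹ u) (a⁻¹ v)]
    simp

lemma affMap_mem_aut (r : Fˣ) (s s' : F) : affMap r s s' ∈ autSub F := by
  intro u v
  simp only [rook_adj_iff, affMap_apply]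
  have h1 : ∀ (t a b : F), (r : F) * a + t = r * b + t ↔ a = b := by
    intro t a b
    rw [add_left_inj, mul_right_injective₀ r.ne_zero |>.eq_iff]
  simp only [ne_eq, h1]

lemma prodComm_mem_aut : (Equiv.prodComm F F) ∈ autSub F := by
  intro u v
  simp only [rook_adj_iff, Equiv.prodComm_apply, Prod.fst_swap, Prod.snd_swap]
  tauto

/-- The generating set of `G`. -/
def genSet (F : Type*) [Field F] : Set (Equiv.Perm (F × F)) :=
  insert (Equiv.prodComm F F) (Set.range fun t : Fˣ × F × F => affMap t.1 t.2.1 t.2.2)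

lemma affMap_mem_G (r : Fˣ) (s s' : F) : affMap r s s' ∈ Subgroup.closure (genSet F) :=
  Subgroup.subset_closure (Set.mem_insert_of_mem _ ⟨(r, s, s'), rfl⟩)

lemma prodComm_mem_G : (Equiv.prodComm F F) ∈ Subgroup.closure (genSet F) :=
  Subgroup.subset_closure (Set.mem_insert _ _)

lemma exists_canon (u v : F × F) (h : (rookGraph F).Adj u v) :
    ∃ g ∈ Subgroup.closure (genSet F), g u = ((0:F), (0:F)) ∧ g v = ((0:F), (1:F)) := by
  rcases h with ⟨h1, h2⟩ | ⟨h1, h2⟩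
  · have hd : v.2 - u.2 ≠ 0 := sub_ne_zero.2 (Ne.symm h2)
    set r : Fˣ := (Units.mk0 _ hd)⁻¹ with hr
    refine ⟨affMap r (-(r * u.1)) (-(r * u.2)), affMap_mem_G _ _ _, ?_, ?_⟩
    · rw [affMap_apply]; simp
    · rw [affMap_apply, ← h1]
      have : (r : F) = (v.2 - u.2)⁻¹ := rfl
      rw [Prod.mk.injEq]; refine ⟨?_, ?_⟩ <;> simp only [this] <;> field_simp <;> ring
  · have hd : v.1 - u.1 ≠ 0 := sub_ne_zero.2 (Ne.symm h2)
    set r : Fˣ := (Units.mk0 _ hd)⁻¹ with hr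
    refine ⟨affMap r (-(r * u.2)) (-(r * u.1)) * Equiv.prodComm F F,
      mul_mem (affMap_mem_G _ _ _) prodComm_mem_G, ?_, ?_⟩
    · rw [Equiv.Perm.mul_apply]; rw [show (Equiv.prodComm F F) u = (u.2, u.1) from rfl]
      rw [affMap_apply]; simp
    · rw [Equiv.Perm.mul_apply]; rw [show (Equiv.prodComm F F) v = (v.2, v.1) from rfl]
      rw [affMap_apply, ← h1]
      have : (r : F) = (v.1 - u.1)⁻¹ := rfl
      rw [Prod.mk.injEq]; refine ⟨?_, ?_⟩ <;> simp only [this] <;> field_simp <;> ring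

lemma orbitRel_iff (p q : F × F) :
    (orbitRel (Subgroup.closure (Set.range (diagShift (F := F)))) (F × F)).r p q ↔
      p.1 - p.2 = q.1 - q.2 := by
  constructor
  · rintro ⟨⟨n, hn⟩, rfl⟩
    obtain ⟨x, rfl⟩ := mem_N_iff.1 hn
    show ((diagShift x) q).1 - ((diagShift x) q).2 = _
    simp [diagShift_apply]
  · intro h
    refine ⟨⟨diagShift (p.2 - q.2), mem_N_iff.2 ⟨_, rfl⟩⟩, ?_⟩
    show diagShift (p.2 - q.2) q = p
    rw [diagShift_apply]
    ext
    · simp only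
      have : p.1 = q.1 + (p.2 - q.2) := by linear_combination h
      exact this.symm
    · simp

/-- The orbit quotient is in bijection with `F` via `(i,j) ↦ i - j`. -/
def qEquiv : Quotient (orbitRel (Subgroup.closure (Set.range (diagShift (F := F)))) (F × F)) ≃ F where
  toFun := Quotient.lift (fun p : F × F => p.1 - p.2)
    (fun p q hpq => (orbitRel_iff p q).1 hpq)
  invFun d := Quotient.mk _ (d, 0)
  left_inv := by
    intro X
    obtain ⟨p, rfl⟩ := Quotient.exists_rep X
    exact Quotient.sound ((orbitRel_iff _ _).2 (by simp))
  right_inv d := by simp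

end Aux

/-- For `b = |F|` a prime power (`F` the field of order `b`), the group
`G = ⟨(i,j) ↦ (ri+s, rj+s'), (i,j) ↦ (j,i)⟩ ≤ Aut(K_b □ K_b)` is vertex- and
edge-transitive, and `N = {(i,j) ↦ (i+x, j+x) : x ∈ F}` is a nontrivial normal
subgroup of `G` whose quotient graph is the complete graph `K_b`. -/
theorem stmt18 (F : Type*) [Field F] [Fintype F] :
    let Γ := rookGraph F
    let N : Subgroup (Equiv.Perm (F × F)) := Subgroup.closure (Set.range diagShift)
    let G : Subgroup (Equiv.Perm (F × F)) := Subgroup.closure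
      (insert (Equiv.prodComm F F)
        (Set.range fun t : Fˣ × F × F => affMap t.1 t.2.1 t.2.2))
    -- `G` consists of automorphisms of `Γ`
    (∀ g ∈ G, ∀ u v : F × F, Γ.Adj (g u) (g v) ↔ Γ.Adj u v) ∧
    -- `N` is a nontrivial subgroup of `G`, normal in `G`
    N ≤ G ∧ N ≠ ⊥ ∧
    (∀ g ∈ G, ∀ n ∈ N, g * n * g⁻¹ ∈ N) ∧
    -- `G` is transitive on vertices and on edges
    (∀ u v : F × F, ∃ g ∈ G, g u = v) ∧
    (∀ u v x y : F × F, Γ.Adj u v → Γ.Adj x y →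
      ∃ g ∈ G, (g u = x ∧ g v = y) ∨ (g u = y ∧ g v = x)) ∧
    -- the quotient graph `Γ_N` is the complete graph `K_b`, `b = |F|`
    Nat.card (Quotient (orbitRel N (F × F))) = Fintype.card F ∧
    (∀ X Y : Quotient (orbitRel N (F × F)), X ≠ Y →
      (quotientGraph Γ N).Adj X Y) := by
  intro Γ N G
  have hGgen : G = Subgroup.closure (genSet F) := rfl
  have hGaut : G ≤ autSub F := by
    rw [hGgen, Subgroup.closure_le]
    rintro g (rfl | ⟨⟨r, s, s'⟩, rfl⟩)
    exacts [prodComm_mem_aut, affMap_mem_aut r s s']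
  have hNG : N ≤ G := by
    rw [Subgroup.closure_le]
    rintro n ⟨x, rfl⟩
    rw [diagShift_eq_affMap]
    exact affMap_mem_G 1 x x
  have hGnorm : G ≤ Subgroup.normalizer (N : Set _) := by
    rw [hGgen, Subgroup.closure_le]
    rintro g (rfl | ⟨⟨r, s, s'⟩, rfl⟩)
    · exact mem_normalizer_N (fun x => ⟨x, prodComm_mul_diagShift x⟩)
        (fun x => ⟨x, by
          rw [show (Equiv.prodComm F F)⁻¹ = Equiv.prodComm F F from rfl,
            prodComm_mul_diagShift]⟩)
    · refine mem_normalizer_N (fun x => ⟨r * x, affMap_mul_diagShift r s s' x⟩)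
        (fun x => ⟨r⁻¹ * x, ?_⟩)
      have := affMap_mul_diagShift r s s' (r⁻¹ * x)
      rw [show ((r : F) * ((r⁻¹ : Fˣ) * x)) = x by
        rw [← mul_assoc, ← Units.val_mul, mul_inv_cancel, Units.val_one, one_mul]] at this
      calc (affMap r s s')⁻¹ * diagShift x
          = (affMap r s s')⁻¹ * (diagShift x * affMap r s s') * (affMap r s s')⁻¹ := by
            group
        _ = (affMap r s s')⁻¹ * (affMap r s s' * diagShift (r⁻¹ * x)) * (affMap r s s')⁻¹ := by
            rw [this]
        _ = diagShift ((r⁻¹ : Fˣ) * x) * (affMap r s s')⁻¹ := by group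
  refine ⟨fun g hg => hGaut hg, hNG, ?_, fun g hg => conj_mem_N (fun x => ?_),
    fun u v => ?_, fun u v x y huv hxy => ?_, ?_, ?_⟩
  · -- N ≠ ⊥
    intro hbot
    have h1 : diagShift (1 : F) ∈ N := Subgroup.subset_closure ⟨1, rfl⟩
    rw [hbot, Subgroup.mem_bot] at h1
    have := congrArg (fun g : Equiv.Perm (F × F) => (g (0, 0)).1) h1
    simp [diagShift_apply] at this
  · -- normality
    have hg' := hGnorm hg
    rw [Subgroup.mem_normalizer_iff] at hg'
    obtain ⟨y, hy⟩ : ∃ y, g * diagShift x * g⁻¹ = y ∧ True := ⟨_, rfl, trivial⟩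
    have : g * diagShift x * g⁻¹ ∈ N :=
      (hg' (diagShift x)).1 (mem_N_iff.2 ⟨x, rfl⟩)
    obtain ⟨z, hz⟩ := mem_N_iff.1 this
    exact ⟨z, by rw [hz]; group⟩
  · -- vertex transitivity
    refine ⟨affMap 1 (v.1 - u.1) (v.2 - u.2), affMap_mem_G _ _ _, ?_⟩
    rw [affMap_apply]
    simp
  · -- edge transitivity
    obtain ⟨g1, hg1, hg1u, hg1v⟩ := exists_canon u v huv
    obtain ⟨g2, hg2, hg2x, hg2y⟩ := exists_canon x y hxy
    refine ⟨g2⁻¹ * g1, mul_mem (inv_mem hg2) hg1, Or.inl ⟨?_, ?_⟩⟩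
    · rw [Equiv.Perm.mul_apply, hg1u, ← hg2x, Equiv.Perm.inv_def, Equiv.symm_apply_apply]
    · rw [Equiv.Perm.mul_apply, hg1v, ← hg2y, Equiv.Perm.inv_def, Equiv.symm_apply_apply]
  · -- cardinality
    rw [Nat.card_congr (qEquiv (F := F)), Nat.card_eq_fintype_card]
  · -- quotient adjacency
    intro X Y hXY
    obtain ⟨p, rfl⟩ := Quotient.exists_rep X
    obtain ⟨q, rfl⟩ := Quotient.exists_rep Y
    refine ⟨hXY, (p.1 - p.2, 0), (q.1 - q.2, 0), ?_, ?_, ?_⟩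
    · exact Quotient.sound ((orbitRel_iff _ _).2 (by simp))
    · exact Quotient.sound ((orbitRel_iff _ _).2 (by simp))
    · refine Or.inr ⟨rfl, fun hc => hXY ?_⟩
      exact Quotient.sound ((orbitRel_iff _ _).2 (by simpa using hc))
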